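/- Suppose for all z in a set with at least two elements mapping to distinct values u(z) := g_A⁻¹(z, a), and for all η, the identity T(ρ̃·u(z) + √(1-ρ̃²)·η) = ρ·u(z) + √(1-ρ²)·η holds for a fixed measurable T : ℝ → ℝ and ρ, ρ̃ ∈ (-1,1). Then ρ = ρ̃ and T is the identity on the relevant range. -/
import Mathlib


/-- If for all `z` in a set `S` containing two points with distinct values `u z`, and all
`η`, the identity `T(ρ̃·u(z) + √(1-ρ̃²)·η) = ρ·u(z) + √(1-ρ²)·η` holds with
`ρ, ρ̃ ∈ (-1,1)`, then `ρ = ρ̃` and `T` is the identity on the relevant range. -/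
theorem stmt15 (T : ℝ → ℝ) (hT : Measurable T) (ρ ρt : ℝ)
    (hρ : ρ ∈ Set.Ioo (-1 : ℝ) 1) (hρt : ρt ∈ Set.Ioo (-1 : ℝ) 1)
    (u : ℝ → ℝ) (S : Set ℝ)
    (hS : ∃ z₁ ∈ S, ∃ z₂ ∈ S, u z₁ ≠ u z₂)
    (h : ∀ z ∈ S, ∀ η : ℝ,
      T (ρt * u z + Real.sqrt (1 - ρt ^ 2) * η) = ρ * u z + Real.sqrt (1 - ρ ^ 2) * η) :
    ρ = ρt ∧
      ∀ z ∈ S, ∀ η : ℝ,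
        T (ρt * u z + Real.sqrt (1 - ρt ^ 2) * η) =
          ρt * u z + Real.sqrt (1 - ρt ^ 2) * η := by
  obtain ⟨z₁, hz₁, z₂, hz₂, hu⟩ := hS
  set s := Real.sqrt (1 - ρ ^ 2) with hs
  set st := Real.sqrt (1 - ρt ^ 2) with hst
  have hρ2 : (0:ℝ) < 1 - ρ ^ 2 := by nlinarith [hρ.1, hρ.2]
  have hρt2 : (0:ℝ) < 1 - ρt ^ 2 := by nlinarith [hρt.1, hρt.2]
  have hspos : 0 < s := Real.sqrt_pos.mpr hρ2
  have hstpos : 0 < st := Real.sqrt_pos.mpr hρt2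
  have hssq : s ^ 2 = 1 - ρ ^ 2 := Real.sq_sqrt hρ2.le
  have hstsq : st ^ 2 = 1 - ρt ^ 2 := Real.sq_sqrt hρt2.le
  have key : ∀ z ∈ S, T 0 = ρ * u z - s * (ρt * u z / st) := by
    intro z hz
    have := h z hz (-(ρt * u z) / st)
    have h0 : ρt * u z + st * (-(ρt * u z) / st) = 0 := by
      field_simp; ring
    rw [h0] at this
    rw [this]; ring
  have e := (key z₁ hz₁).symm.trans (key z₂ hz₂)
  have hlin : ρ * st = s * ρt := by
    have : (ρ - s * ρt / st) * (u z₁ - u z₂) = 0 := by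
      field_simp at e ⊢; linarith
    rcases mul_eq_zero.mp this with h1 | h2
    · field_simp at h1; linarith
    · exact absurd (sub_eq_zero.mp h2) hu
  have hsqlin : (ρ * st) ^ 2 = (s * ρt) ^ 2 := by rw [hlin]
  have hsq : ρ ^ 2 = ρt ^ 2 := by nlinarith [hsqlin, hssq, hstsq]
  have hseq : s = st := by rw [hs, hst, hsq]
  have hρeq : ρ = ρt := by
    have := hlin
    rw [hseq] at this
    exact mul_right_cancel₀ hstpos.ne' (this.trans (mul_comm st ρt))
  refine ⟨hρeq, fun z hz η => ?_⟩
  have := h z hz η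
  rw [hρeq, hseq] at this
  exact this
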